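/- When acting on even polynomials f(x₁²,…,x_r²) with f symmetric, the type-D Cherednik operator U_j^D equals, after the substitution y_j = x_j², the operator 2(U_j^A - 1/2), where U_j^A is the type-A Cherednik operator in variables y₁,…,y_r with parameter a. -/

import Mathlib

open MvPolynomial Finset

noncomputable section

abbrev Pol (r : ℕ) : Type := MvPolynomial (Fin r) ℂ

/-- Multiplication operator by a polynomial. -/
def mulOp {r : ℕ} (p : Pol r) : Module.End ℂ (Pol r) := LinearMap.mulLeft ℂ p

/-- Partial derivative operator. -/
def pd {r : ℕ} (j : Fin r) : Module.End ℂ (Pol r) := (pderiv j).toLinearMap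

/-- The transposition operator `s_{ij}` swapping the variables `i` and `j`. -/
def swOp {r : ℕ} (i j : Fin r) : Module.End ℂ (Pol r) :=
  (rename ⇑(Equiv.swap i j) : Pol r →ₐ[ℂ] Pol r).toLinearMap

/-- The sign change operator `σ_j : x_j ↦ -x_j`. -/
def negOp {r : ℕ} (j : Fin r) : Module.End ℂ (Pol r) :=
  (aeval (fun k : Fin r => if k = j then -(X j) else X k) : Pol r →ₐ[ℂ] Pol r).toLinearMap

/-- The signed transposition operator `σ_{ij} : x_i ↦ -x_j, x_j ↦ -x_i`. -/
def sswOp {r : ℕ} (i j : Fin r) : Module.End ℂ (Pol r) :=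
  (aeval (fun k : Fin r => if k = i then -(X j) else if k = j then -(X i) else X k)
    : Pol r →ₐ[ℂ] Pol r).toLinearMap

/-- Ordered product `f 0 * f 1 * ⋯ * f (r-1)` of operators. -/
def opProd {r : ℕ} (f : Fin r → Module.End ℂ (Pol r)) : Module.End ℂ (Pol r) :=
  ((List.finRange r).map f).prod

/-- The type-D Dunkl operator (no long-root term)
`D_j = ∂_j + (a/2) ∑_{i≠j} [(x_j-x_i)⁻¹(1-s_{ij}) + (x_j+x_i)⁻¹(1-σ_{ij})]`. -/
def dunklD {r : ℕ} (a : ℂ) (qs qσ : Fin r → Fin r → Module.End ℂ (Pol r)) (j : Fin r) :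
    Module.End ℂ (Pol r) :=
  pd j + (a / 2) • ∑ i ∈ Finset.univ.erase j, (qs i j + qσ i j)

/-- Specification: `qs i j` is division of `(1 - s_{ij}) f` by `x_j - x_i`. -/
def QuotS {r : ℕ} (qs : Fin r → Fin r → Module.End ℂ (Pol r)) : Prop :=
  ∀ i j : Fin r, i ≠ j → ∀ f : Pol r, (X j - X i) * qs i j f = f - swOp i j f

/-- Specification: `qσ i j` is division of `(1 - σ_{ij}) f` by `x_j + x_i`. -/
def QuotSig {r : ℕ} (qσ : Fin r → Fin r → Module.End ℂ (Pol r)) : Prop :=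
  ∀ i j : Fin r, i ≠ j → ∀ f : Pol r, (X j + X i) * qσ i j f = f - sswOp i j f

/-- The type-D Cherednik operator `U_j^D = D_j x_j - (a/2) ∑_{i<j} (s_{ij} + σ_{ij})`. -/
def cherednikD {r : ℕ} (a : ℂ) (qs qσ : Fin r → Fin r → Module.End ℂ (Pol r)) (j : Fin r) :
    Module.End ℂ (Pol r) :=
  dunklD a qs qσ j * mulOp (X j) -
    (a / 2) • ∑ i ∈ Finset.univ.filter (fun i => i < j), (swOp i j + sswOp i j)

/-- The type-A Dunkl operator `D_j = ∂_j + (a/2) ∑_{i ≠ j} q i j`, where `q i j` is the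
difference-quotient operator `f ↦ (y_j - y_i)⁻¹ (1 - s_{ij}) f` (given as data, pinned down
by the divisibility specification `DunklQuotA`). -/
def dunklA {r : ℕ} (a : ℂ) (q : Fin r → Fin r → Module.End ℂ (Pol r)) (j : Fin r) :
    Module.End ℂ (Pol r) :=
  pd j + (a / 2) • ∑ i ∈ Finset.univ.erase j, q i j

/-- Specification: `q i j` is division of `(1 - s_{ij}) f` by `y_j - y_i`. -/
def DunklQuotA {r : ℕ} (q : Fin r → Fin r → Module.End ℂ (Pol r)) : Prop :=
  ∀ i j : Fin r, i ≠ j → ∀ f : Pol r,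
    (X j - X i) * q i j f = f - swOp i j f

/-- The type-A Cherednik operator `U_j = D_j y_j - (a/2) ∑_{i<j} s_{ij}`. -/
def cherednikA {r : ℕ} (a : ℂ) (q : Fin r → Fin r → Module.End ℂ (Pol r)) (j : Fin r) :
    Module.End ℂ (Pol r) :=
  dunklA a q j * mulOp (X j) - (a / 2) • ∑ i ∈ Finset.univ.filter (fun i => i < j), swOp i j

/-- Substitution of squared variables: `f(y₁,…,y_r) ↦ f(x₁²,…,x_r²)`. -/
def sqVars {r : ℕ} (f : Pol r) : Pol r := aeval (fun k : Fin r => (X k) ^ 2) f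


section Aux

variable {r : ℕ}

lemma X_sub_ne_zero {i j : Fin r} (h : i ≠ j) : (X j - X i : Pol r) ≠ 0 := by
  intro hx
  have : (X j : Pol r) = X i := by linear_combination (norm := ring_nf) hx
  exact h (MvPolynomial.X_injective this).symm

lemma X_add_ne_zero {i j : Fin r} (h : i ≠ j) : (X j + X i : Pol r) ≠ 0 := by
  intro hx
  have := congrArg (MvPolynomial.coeff (Finsupp.single j 1)) hx
  have hne : (Finsupp.single i 1 : Fin r →₀ ℕ) ≠ Finsupp.single j 1 :=
    fun hh => h (Finsupp.single_left_injective one_ne_zero hh)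
  rw [MvPolynomial.coeff_add, MvPolynomial.coeff_X, MvPolynomial.coeff_X', if_neg hne,
    MvPolynomial.coeff_zero] at this
  norm_num at this

lemma swOp_apply (i j : Fin r) (f : Pol r) : swOp i j f = rename (Equiv.swap i j) f := rfl

lemma swOp_sqVars (i j : Fin r) (f : Pol r) :
    swOp i j (sqVars f) = sqVars (swOp i j f) := by
  simp only [swOp, sqVars, AlgHom.toLinearMap_apply]
  rw [← AlgHom.comp_apply, ← AlgHom.comp_apply]
  congr 1
  apply MvPolynomial.algHom_ext
  intro k
  simp

lemma sswOp_sqVars (i j : Fin r) (h : i ≠ j) (f : Pol r) :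
    sswOp i j (sqVars f) = sqVars (swOp i j f) := by
  simp only [sswOp, swOp, sqVars, AlgHom.toLinearMap_apply]
  rw [← AlgHom.comp_apply, ← AlgHom.comp_apply]
  congr 1
  apply MvPolynomial.algHom_ext
  intro k
  by_cases hki : k = i
  · subst hki; simp [Equiv.swap_apply_left]
  · by_cases hkj : k = j
    · subst hkj; simp [Equiv.swap_apply_right, hki]
    · simp [hki, hkj, Equiv.swap_apply_of_ne_of_ne hki hkj]

lemma pd_sqVars (j : Fin r) (f : Pol r) :
    pd j (sqVars f) = 2 * X j * sqVars (pd j f) := by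
  show pderiv j (sqVars f) = 2 * X j * sqVars (pderiv j f)
  induction f using MvPolynomial.induction_on with
  | C c => simp [sqVars]
  | add p q hp hq => simp only [sqVars, map_add] at *; rw [hp, hq]; ring
  | mul_X p i hp =>
      simp only [sqVars, map_mul, aeval_X, pderiv_mul, pderiv_X] at *
      rw [hp]
      by_cases hij : j = i
      · subst hij; simp [Pi.single_apply]; ring
      · simp [Pi.single_apply, hij]; ring

lemma sqVars_mul (p q : Pol r) : sqVars (p * q) = sqVars p * sqVars q := by
  simp [sqVars]

lemma sqVars_X (j : Fin r) : sqVars (X j : Pol r) = (X j) ^ 2 := by simp [sqVars]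

lemma swOp_X_of (i j : Fin r) : swOp i j (X j : Pol r) = X i := by
  simp [swOp_apply, rename_X, Equiv.swap_apply_right]

lemma sswOp_X_of (i j : Fin r) (h : i ≠ j) : sswOp i j (X j : Pol r) = -(X i) := by
  show (aeval (fun k : Fin r => if k = i then -(X j) else if k = j then -(X i) else X k))
    (X j : Pol r) = -(X i)
  simp [h.symm]

lemma sswOp_mul (i j : Fin r) (p q : Pol r) : sswOp i j (p * q) = sswOp i j p * sswOp i j q := by
  simp [sswOp]

lemma swOp_mul (i j : Fin r) (p q : Pol r) : swOp i j (p * q) = swOp i j p * swOp i j q := by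
  simp [swOp_apply]

lemma sqVars_add (p q : Pol r) : sqVars (p + q) = sqVars p + sqVars q := by simp [sqVars]

lemma sqVars_sub (p q : Pol r) : sqVars (p - q) = sqVars p - sqVars q := by simp [sqVars]

lemma sqVars_smul (c : ℂ) (p : Pol r) : sqVars (c • p) = c • sqVars p := by simp [sqVars]

lemma sqVars_nsmul (n : ℕ) (p : Pol r) : sqVars (n • p) = n • sqVars p := by simp [sqVars]

end Aux

/-- On even symmetric polynomials `f(x₁²,…,x_r²)`, the type-D Cherednik operator `U_j^D`
equals `2(U_j^A - 1/2)` in the squared variables `y_j = x_j²`, where `U_j^A` is the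
type-A Cherednik operator with parameter `a`. -/
theorem cherednikD_on_even {r : ℕ} (a : ℂ)
    (qs qσ qA : Fin r → Fin r → Module.End ℂ (Pol r))
    (hqs : QuotS qs) (hqσ : QuotSig qσ) (hqA : DunklQuotA qA)
    (j : Fin r) (f : Pol r) (hf : f.IsSymmetric) :
    cherednikD a qs qσ j (sqVars f)
      = sqVars ((2 : ℂ) • (cherednikA a qA j f - (1 / 2 : ℂ) • f)) := by
  classical
  set s : Pol r := sqVars f with hs
  -- symmetry facts
  have hsw : ∀ i : Fin r, swOp i j f = f := fun i => hf (Equiv.swap i j)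
  have hsws : ∀ i : Fin r, swOp i j s = s := by
    intro i; rw [hs, swOp_sqVars, hsw]
  have hssws : ∀ i : Fin r, i ≠ j → sswOp i j s = s := by
    intro i hij; rw [hs, sswOp_sqVars i j hij, hsw]
  -- quotient operator values
  have hqsv : ∀ i : Fin r, i ≠ j → qs i j (X j * s) = s := by
    intro i hij
    have h := hqs i j hij (X j * s)
    rw [swOp_mul, swOp_X_of, hsws] at h
    have : (X j - X i : Pol r) * qs i j (X j * s) = (X j - X i) * s := by
      rw [h]; ring
    exact mul_left_cancel₀ (X_sub_ne_zero hij) this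
  have hqσv : ∀ i : Fin r, i ≠ j → qσ i j (X j * s) = s := by
    intro i hij
    have h := hqσ i j hij (X j * s)
    rw [sswOp_mul, sswOp_X_of i j hij, hssws i hij] at h
    have : (X j + X i : Pol r) * qσ i j (X j * s) = (X j + X i) * s := by
      rw [h]; ring
    exact mul_left_cancel₀ (X_add_ne_zero hij) this
  have hqAv : ∀ i : Fin r, i ≠ j → qA i j (X j * f) = f := by
    intro i hij
    have h := hqA i j hij (X j * f)
    rw [swOp_mul, swOp_X_of, hsw] at h
    have : (X j - X i : Pol r) * qA i j (X j * f) = (X j - X i) * f := by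
      rw [h]; ring
    exact mul_left_cancel₀ (X_sub_ne_zero hij) this
  -- expand both sides
  simp only [cherednikD, cherednikA, dunklD, dunklA, LinearMap.sub_apply,
    Module.End.mul_apply, LinearMap.add_apply, LinearMap.smul_apply, LinearMap.sum_apply,
    mulOp, LinearMap.mulLeft_apply]
  have h1 : ∑ i ∈ Finset.univ.erase j, (qs i j (X j * s) + qσ i j (X j * s))
      = (Finset.univ.erase j).card • (s + s) := by
    rw [← Finset.sum_const]
    refine Finset.sum_congr rfl fun i hi => ?_
    have hij := (Finset.mem_erase.mp hi).1
    rw [hqsv i hij, hqσv i hij]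
  have h2 : ∑ i ∈ Finset.univ.filter (fun i => i < j), (swOp i j s + sswOp i j s)
      = (Finset.univ.filter (fun i => i < j)).card • (s + s) := by
    rw [← Finset.sum_const]
    refine Finset.sum_congr rfl fun i hi => ?_
    have hij : i ≠ j := Fin.ne_of_lt (Finset.mem_filter.mp hi).2
    rw [hsws i, hssws i hij]
  have h3 : ∑ i ∈ Finset.univ.erase j, qA i j (X j * f)
      = (Finset.univ.erase j).card • f := by
    rw [← Finset.sum_const]
    exact Finset.sum_congr rfl fun i hi => hqAv i (Finset.mem_erase.mp hi).1
  have h4 : ∑ i ∈ Finset.univ.filter (fun i => i < j), swOp i j f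
      = (Finset.univ.filter (fun i => i < j)).card • f := by
    rw [← Finset.sum_const]
    exact Finset.sum_congr rfl fun i _ => hsw i
  rw [h1, h2, h3, h4]
  -- derivatives
  have hpdD : pd j (X j * s) = s + (2 : ℂ) • ((X j)^2 * sqVars (pd j f)) := by
    show pderiv j (X j * s) = _
    rw [pderiv_mul]
    have : pd j s = 2 * X j * sqVars (pd j f) := pd_sqVars j f
    rw [show (pderiv j) s = pd j s from rfl, this, pderiv_X]
    rw [smul_eq_C_mul, show (C (2:ℂ) : Pol r) = 2 from map_ofNat C 2]
    simp only [Pi.single_apply, if_pos rfl, if_true, one_mul]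
    ring
  have hpdA : pd j (X j * f) = f + X j * pd j f := by
    show pderiv j (X j * f) = f + X j * (pderiv j) f
    rw [pderiv_mul, pderiv_X]
    simp [Pi.single_apply]
  rw [hpdD, hpdA]
  -- push sqVars through the right-hand side
  simp only [sqVars_sub, sqVars_add, sqVars_smul, sqVars_nsmul, sqVars_mul, sqVars_X, ← hs,
    ← Nat.cast_smul_eq_nsmul ℂ]
  module
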